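/- Let ((x_n,r_n)) be a system satisfying condition C_1 with sequence N_j = 2^{d j ψ(2^{-j})}, and let φ ∈ Φ. Define γ(j) = max{k ∈ N : N_k 2^{dk} ≤ 2^{-dj φ(2^{-j})} 2^{dj}}. For a dyadic cube U, δ > 1, and integer j ≥ δ·g(U), let Q̃(U,j,δ) be the set of dyadic cubes V of generation j contained in U that intersect ⋃_{k=g(U)}^{γ(j)} ⋃_{p∈T_k} B(y_p, ρ_p^δ). Then there is a constant C_d depending only on d such that #Q̃(U,j,δ) ≤ C_d · 2^{d(j-g(U))} · [ 2^{-dj φ(2^{-j})} + Σ_{g(U) ≤ k ≤ j/δ} 2^{-dk(δ - 1 - ψ(2^{-k}))} ]. -/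

import Mathlib

open Metric Set Filter

noncomputable section

/-- The dyadic cube of generation `j` in `ℝ^d` (sup norm) with corner `k · 2^{-j}`. -/
def dyadicCube (d j : ℕ) (k : Fin d → ℤ) : Set (Fin d → ℝ) :=
  {x | ∀ i, (k i : ℝ) * ((2:ℝ) ^ j)⁻¹ ≤ x i ∧ x i < ((k i : ℝ) + 1) * ((2:ℝ) ^ j)⁻¹}

/-- `n` is an irreducible index for the sequence of centers `x`. -/
def Irred {α : Type*} (x : ℕ → α) (n : ℕ) : Prop := ∀ m < n, x m ≠ x n

/-- The set `T_j` of irreducible indices whose radius lies in `(2^{-(j+1)}, 2^{-j}]`. -/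
def Tset {d : ℕ} (x : ℕ → Fin d → ℝ) (r : ℕ → ℝ) (j : ℕ) : Set ℕ :=
  {n | Irred x n ∧ ((2:ℝ) ^ (j + 1))⁻¹ < r n ∧ r n ≤ ((2:ℝ) ^ j)⁻¹}

/-- Condition `C₁` (weak redundancy). -/
def WeakRedundancy {d : ℕ} (x : ℕ → Fin d → ℝ) (r : ℕ → ℝ) (N : ℕ → ℕ) : Prop :=
  Monotone N ∧ (∀ j, 1 ≤ N j) ∧
  Tendsto (fun j : ℕ => Real.logb 2 (N j) / j) atTop (nhds 0) ∧
  ∀ j, ∃ c : ℕ → ℕ, (∀ n ∈ Tset x r j, c n < N j) ∧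
    ∀ m ∈ Tset x r j, ∀ n ∈ Tset x r j, m ≠ n → c m = c n →
      Disjoint (closedBall (x m) (r m)) (closedBall (x n) (r n))

/-- The class `Φ` of admissible modulating functions. -/
structure MemPhi (φ : ℝ → ℝ) : Prop where
  cont : Continuous φ
  mono : MonotoneOn φ (Ici 0)
  nonneg : ∀ x ∈ Ici (0:ℝ), 0 ≤ φ x
  zero : φ 0 = 0
  anti : StrictAntiOn (fun x : ℝ => x ^ (-(φ x))) (Ioi 0)
  tendsto_top : Tendsto (fun x : ℝ => x ^ (-(φ x))) (nhdsWithin 0 (Ioi 0)) atTop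
  incr : ∀ α β : ℝ, 0 < α → 0 < β →
    ∃ ε > 0, StrictMonoOn (fun x : ℝ => x ^ (α - β * φ x)) (Ioo 0 ε)


lemma mem_floorCube {d : ℕ} (g : ℕ) (y : Fin d → ℝ) :
    y ∈ dyadicCube d g (fun i => ⌊y i * 2 ^ g⌋) := by
  intro i
  have h2 : (0:ℝ) < 2 ^ g := by positivity
  constructor
  · rw [← div_eq_mul_inv, div_le_iff₀ h2]
    exact Int.floor_le _
  · rw [← div_eq_mul_inv, lt_div_iff₀ h2]
    exact Int.lt_floor_add_one _

lemma cube_subset_closedBall {d : ℕ} (g : ℕ) (c : Fin d → ℝ) {ρ : ℝ}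
    (hρ : ((2:ℝ) ^ g)⁻¹ ≤ ρ) :
    dyadicCube d g (fun i => ⌊c i * 2 ^ g⌋) ⊆ closedBall c ρ := by
  intro z hz
  have h2 : (0:ℝ) < ((2:ℝ) ^ g)⁻¹ := by positivity
  rw [mem_closedBall, dist_pi_le_iff (h2.le.trans hρ)]
  intro i
  have hc := mem_floorCube g c i
  have hzi := hz i
  rw [Real.dist_eq, abs_le]
  constructor <;> nlinarith [hc.1, hc.2, hzi.1, hzi.2]

noncomputable def meetFinset (d j : ℕ) (c : Fin d → ℝ) (ρ : ℝ) : Finset (Fin d → ℤ) :=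
  Fintype.piFinset fun i => Finset.Icc (⌈(c i - ρ) * 2 ^ j⌉ - 1) ⌊(c i + ρ) * 2 ^ j⌋

lemma mem_meetFinset {d j : ℕ} {c : Fin d → ℝ} {ρ : ℝ} {k : Fin d → ℤ}
    (h : (dyadicCube d j k ∩ closedBall c ρ).Nonempty) : k ∈ meetFinset d j c ρ := by
  obtain ⟨y, hy, hyb⟩ := h
  rw [meetFinset, Fintype.mem_piFinset]
  intro i
  have h2 : (0:ℝ) < 2 ^ j := by positivity
  have hdi : |y i - c i| ≤ ρ := by
    have h1 := dist_le_pi_dist y c i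
    rw [Real.dist_eq] at h1
    exact h1.trans (mem_closedBall.mp hyb)
  have habs := abs_le.mp hdi
  obtain ⟨hl, hr⟩ := hy i
  rw [← div_eq_mul_inv, div_le_iff₀ h2] at hl
  rw [← div_eq_mul_inv, lt_div_iff₀ h2] at hr
  rw [Finset.mem_Icc]
  constructor
  · have hce : (⌈(c i - ρ) * 2 ^ j⌉ : ℤ) ≤ k i + 1 := by
      apply Int.ceil_le.mpr
      push_cast
      nlinarith
    omega
  · apply Int.le_floor.mpr
    push_cast
    nlinarith

lemma card_meetFinset_le {d j : ℕ} (c : Fin d → ℝ) {ρ : ℝ} (hρ : 0 ≤ ρ) :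
    ((meetFinset d j c ρ).card : ℝ) ≤ (2 * ρ * 2 ^ j + 2) ^ d := by
  rw [meetFinset, Fintype.card_piFinset]
  push_cast
  have hB : (0:ℝ) ≤ 2 * ρ * 2 ^ j + 2 := by positivity
  calc (∏ i, ((Finset.Icc (⌈(c i - ρ) * 2 ^ j⌉ - 1) ⌊(c i + ρ) * 2 ^ j⌋).card : ℝ))
      ≤ ∏ _i : Fin d, (2 * ρ * 2 ^ j + 2) := by
        apply Finset.prod_le_prod (fun i _ => by positivity)
        intro i _
        rw [Int.card_Icc]
        set a := ⌈(c i - ρ) * 2 ^ j⌉ with ha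
        set b := ⌊(c i + ρ) * 2 ^ j⌋ with hb
        have h1 : (a : ℝ) ≥ (c i - ρ) * 2 ^ j := Int.le_ceil _
        have h2 : (b : ℝ) ≤ (c i + ρ) * 2 ^ j := Int.floor_le _
        rcases le_or_gt 0 (b + 1 - (a - 1)) with h | h
        · have he : (((b + 1 - (a - 1)).toNat : ℕ) : ℝ) = ((b + 1 - (a - 1) : ℤ) : ℝ) := by
            exact_mod_cast congrArg (Int.cast : ℤ → ℝ) (Int.toNat_of_nonneg h)
          rw [he]; push_cast; linarith
        · rw [Int.toNat_of_nonpos h.le]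
          simpa using hB
    _ = (2 * ρ * 2 ^ j + 2) ^ d := by
        rw [Finset.prod_const, Finset.card_univ, Fintype.card_fin]

lemma sum_geo_aux (a γ : ℕ) : ∑ m ∈ Finset.Icc a γ, ((2:ℝ)⁻¹) ^ (γ - m) ≤ 2 := by
  calc ∑ m ∈ Finset.Icc a γ, ((2:ℝ)⁻¹) ^ (γ - m)
      ≤ ∑ m ∈ Finset.range (γ + 1), ((2:ℝ)⁻¹) ^ (γ - m) := by
        apply Finset.sum_le_sum_of_subset_of_nonneg
        · intro m hm
          rw [Finset.mem_range]
          exact Nat.lt_succ_of_le (Finset.mem_Icc.mp hm).2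
        · intros; positivity
    _ = ∑ m ∈ Finset.range (γ + 1), ((2:ℝ)⁻¹) ^ m := by
        simpa using Finset.sum_range_reflect (fun m => ((2:ℝ)⁻¹) ^ m) (γ + 1)
    _ ≤ 2 := by
        have h := sum_geometric_two_le (γ + 1)
        rw [show ((2:ℝ)⁻¹) = 1/2 by norm_num]
        exact h

lemma sum_NtwoPow_le {N : ℕ → ℕ} (hmono : Monotone N) {d : ℕ} (hd : 1 ≤ d) (a γ : ℕ) :
    ∑ m ∈ Finset.Icc a γ, ((N m : ℝ) * 2 ^ (d * m)) ≤ 2 * ((N γ : ℝ) * 2 ^ (d * γ)) := by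
  have hterm : ∀ m ∈ Finset.Icc a γ, ((N m : ℝ) * 2 ^ (d * m))
      ≤ ((N γ : ℝ) * 2 ^ (d * γ)) * ((2:ℝ)⁻¹) ^ (γ - m) := by
    intro m hm
    have hmγ : m ≤ γ := (Finset.mem_Icc.mp hm).2
    have h1 : (N m : ℝ) ≤ N γ := by exact_mod_cast hmono hmγ
    have h2 : (2:ℝ) ^ (d * m) * 2 ^ (γ - m) ≤ 2 ^ (d * γ) := by
      rw [← pow_add]
      apply pow_le_pow_right₀ one_le_two
      have h3 : γ - m ≤ d * (γ - m) := Nat.le_mul_of_pos_left _ hd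
      have h4 : d * m + d * (γ - m) = d * γ := by
        rw [← Nat.mul_add, Nat.add_sub_cancel' hmγ]
      omega
    have hp : (0:ℝ) < 2 ^ (γ - m) := by positivity
    rw [inv_pow, ← div_eq_mul_inv, le_div_iff₀ hp]
    have h5 : (0:ℝ) ≤ (N m : ℝ) := Nat.cast_nonneg _
    calc (N m : ℝ) * 2 ^ (d * m) * 2 ^ (γ - m) = (N m : ℝ) * (2 ^ (d * m) * 2 ^ (γ - m)) := by ring
      _ ≤ (N m : ℝ) * 2 ^ (d * γ) := mul_le_mul_of_nonneg_left h2 h5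
      _ ≤ (N γ : ℝ) * 2 ^ (d * γ) := mul_le_mul_of_nonneg_right h1 (by positivity)
  calc ∑ m ∈ Finset.Icc a γ, ((N m : ℝ) * 2 ^ (d * m))
      ≤ ∑ m ∈ Finset.Icc a γ, ((N γ : ℝ) * 2 ^ (d * γ)) * ((2:ℝ)⁻¹) ^ (γ - m) :=
        Finset.sum_le_sum hterm
    _ = ((N γ : ℝ) * 2 ^ (d * γ)) * ∑ m ∈ Finset.Icc a γ, ((2:ℝ)⁻¹) ^ (γ - m) := by
        rw [← Finset.mul_sum]
    _ ≤ ((N γ : ℝ) * 2 ^ (d * γ)) * 2 :=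
        mul_le_mul_of_nonneg_left (sum_geo_aux a γ) (by positivity)
    _ = 2 * ((N γ : ℝ) * 2 ^ (d * γ)) := by ring

lemma Scount {d : ℕ} (x : ℕ → Fin d → ℝ) (r : ℕ → ℝ) (N : ℕ → ℕ)
    (hr : ∀ n, 0 < r n)
    (hcol : ∀ j, ∃ c : ℕ → ℕ, (∀ n ∈ Tset x r j, c n < N j) ∧
      ∀ m ∈ Tset x r j, ∀ n ∈ Tset x r j, m ≠ n → c m = c n →
        Disjoint (closedBall (x m) (r m)) (closedBall (x n) (r n)))
    (J : ℕ) (K : Fin d → ℤ) (m : ℕ) :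
    {p | p ∈ Tset x r m ∧ (closedBall (x p) (r p) ∩ dyadicCube d J K).Nonempty}.Finite ∧
    (J ≤ m → ({p | p ∈ Tset x r m ∧
        (closedBall (x p) (r p) ∩ dyadicCube d J K).Nonempty}.ncard : ℝ)
      ≤ (N m : ℝ) * (14 * 2 ^ (m - J) : ℝ) ^ d) := by
  obtain ⟨c, hc1, hc2⟩ := hcol m
  set S := {p | p ∈ Tset x r m ∧ (closedBall (x p) (r p) ∩ dyadicCube d J K).Nonempty} with hS
  set cU : Fin d → ℝ := fun i => ((K i : ℝ) + 2⁻¹) * ((2:ℝ) ^ J)⁻¹ with hcU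
  set ρ' : ℝ := ((2:ℝ) ^ m)⁻¹ + ((2:ℝ) ^ (J + 1))⁻¹ with hρ'
  have hρ'0 : 0 ≤ ρ' := by positivity
  set F2 := meetFinset d (m + 2) cU ρ' with hF2
  set t : Finset (ℕ × (Fin d → ℤ)) := Finset.range (N m) ×ˢ F2 with ht
  set f : ℕ → ℕ × (Fin d → ℤ) := fun p => (c p, fun i => ⌊x p i * 2 ^ (m + 2)⌋) with hf
  have hmap : ∀ p ∈ S, f p ∈ (t : Set (ℕ × (Fin d → ℤ))) := by
    intro p hp
    obtain ⟨hpT, y, hy1, hy2⟩ := hp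
    have hrp : r p ≤ ((2:ℝ) ^ m)⁻¹ := hpT.2.2
    simp only [ht, Finset.coe_product, Set.mem_prod, Finset.coe_range, Set.mem_Iio,
      Finset.mem_coe]
    refine ⟨hc1 p hpT, ?_⟩
    apply mem_meetFinset
    refine ⟨x p, mem_floorCube (m + 2) (x p), ?_⟩
    rw [mem_closedBall]
    have hd1 : dist (x p) y ≤ ((2:ℝ) ^ m)⁻¹ := by
      rw [dist_comm]; exact (mem_closedBall.mp hy1).trans hrp
    have hd2 : dist y cU ≤ ((2:ℝ) ^ (J + 1))⁻¹ := by
      rw [dist_pi_le_iff (by positivity)]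
      intro i
      have hyi := hy2 i
      rw [Real.dist_eq, abs_le]
      have he : ((2:ℝ) ^ (J + 1))⁻¹ = 2⁻¹ * ((2:ℝ) ^ J)⁻¹ := by
        rw [pow_succ]; ring
      rw [he]
      simp only [hcU]
      constructor <;> nlinarith [hyi.1, hyi.2]
    calc dist (x p) cU ≤ dist (x p) y + dist y cU := dist_triangle _ _ _
      _ ≤ ρ' := by rw [hρ']; linarith
  have hinj : Set.InjOn f S := by
    intro p hp q hq heq
    by_contra hne
    have hdisj := hc2 p hp.1 q hq.1 hne (congrArg Prod.fst heq)
    have hfun : (fun i => ⌊x p i * 2 ^ (m + 2)⌋) = (fun i => ⌊x q i * 2 ^ (m + 2)⌋) :=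
      congrArg Prod.snd heq
    have hxpq : x p ∈ closedBall (x q) (r q) := by
      have h1 : x p ∈ dyadicCube d (m + 2) (fun i => ⌊x q i * 2 ^ (m + 2)⌋) := by
        rw [← hfun]; exact mem_floorCube _ _
      have h2 : ((2:ℝ) ^ (m + 2))⁻¹ ≤ r q := by
        have := hq.1.2.1
        have hmono : ((2:ℝ) ^ (m + 2))⁻¹ ≤ ((2:ℝ) ^ (m + 1))⁻¹ := by
          apply inv_anti₀ (by positivity)
          apply pow_le_pow_right₀ one_le_two (by omega)
        linarith
      exact cube_subset_closedBall (m + 2) (x q) h2 h1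
    exact (Set.disjoint_left.mp hdisj (mem_closedBall_self (hr p).le)) hxpq
  have hfin : S.Finite := by
    apply Set.Finite.of_finite_image _ hinj
    apply Set.Finite.subset t.finite_toSet
    rintro _ ⟨p, hp, rfl⟩
    exact hmap p hp
  refine ⟨hfin, fun hJm => ?_⟩
  have hcard : S.ncard ≤ t.card := by
    have h1 := Set.ncard_le_ncard_of_injOn f hmap hinj t.finite_toSet
    rwa [Set.ncard_coe_finset] at h1
  have htcard : t.card = N m * F2.card := by
    rw [ht, Finset.card_product, Finset.card_range]
  have hF2card : ((F2.card : ℕ) : ℝ) ≤ (14 * 2 ^ (m - J) : ℝ) ^ d := by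
    refine (card_meetFinset_le cU hρ'0).trans ?_
    apply pow_le_pow_left₀ (by positivity)
    have e1 : ((2:ℝ) ^ m)⁻¹ * 2 ^ (m + 2) = 4 := by
      rw [pow_add]
      rw [← mul_assoc, inv_mul_cancel₀ (by positivity)]
      norm_num
    have e2 : ((2:ℝ) ^ (J + 1))⁻¹ * 2 ^ (m + 2) = 2 * 2 ^ (m - J) := by
      have hmm : (2:ℝ) ^ (m + 2) = 2 ^ (J + 1) * 2 ^ ((m - J) + 1) := by
        rw [← pow_add]; congr 1; omega
      rw [hmm, ← mul_assoc, inv_mul_cancel₀ (by positivity), one_mul, pow_succ]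
      ring
    have h1 : (1:ℝ) ≤ 2 ^ (m - J) := one_le_pow₀ one_le_two
    calc 2 * ρ' * 2 ^ (m + 2) + 2
        = 2 * (((2:ℝ) ^ m)⁻¹ * 2 ^ (m + 2)) + 2 * (((2:ℝ) ^ (J + 1))⁻¹ * 2 ^ (m + 2)) + 2 := by
          rw [hρ']; ring
      _ = 10 + 4 * 2 ^ (m - J) := by rw [e1, e2]; ring
      _ ≤ 14 * 2 ^ (m - J) := by nlinarith
  calc (S.ncard : ℝ) ≤ (t.card : ℝ) := by exact_mod_cast hcard
    _ = (N m : ℝ) * (F2.card : ℝ) := by rw [htcard]; push_cast; ring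
    _ ≤ (N m : ℝ) * (14 * 2 ^ (m - J) : ℝ) ^ d := by
        apply mul_le_mul_of_nonneg_left hF2card (Nat.cast_nonneg _)

/-- Lemma 1 of the paper: counting the generation-`j` dyadic subcubes of `U` that meet
one of the contracted balls `B(y_p, ρ_p^δ)` for `p ∈ T_k`, `g(U) ≤ k ≤ γ(j)`. -/
theorem stmt3 (d : ℕ) (hd : 1 ≤ d) :
    ∃ C : ℝ, 0 < C ∧
    ∀ (x : ℕ → Fin d → ℝ) (r : ℕ → ℝ) (N : ℕ → ℕ) (φ ψ : ℝ → ℝ) (γ : ℕ → ℕ),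
      (∀ n i, x n i ∈ Icc (0:ℝ) 1) → (∀ n, 0 < r n) → Antitone r →
      Tendsto r atTop (nhds 0) →
      WeakRedundancy x r N → MemPhi φ →
      -- `ψ` is defined by `N_j = 2^{d j ψ(2^{-j})}`
      (∀ j : ℕ, (N j : ℝ) = 2 ^ ((d : ℝ) * j * ψ (((2:ℝ) ^ j)⁻¹))) →
      -- `γ(j) = max {k : N_k 2^{dk} ≤ 2^{-d j φ(2^{-j})} 2^{dj}}`
      (∀ j : ℕ, IsGreatest {k : ℕ |
          (N k : ℝ) * 2 ^ ((d : ℝ) * k)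
            ≤ 2 ^ (-((d : ℝ) * j * φ (((2:ℝ) ^ j)⁻¹))) * 2 ^ ((d : ℝ) * j)} (γ j)) →
      ∀ (δ : ℝ), 1 < δ →
      ∀ (J : ℕ) (K : Fin d → ℤ), (∀ i, 0 ≤ K i ∧ K i < 2 ^ J) →
      ∀ j : ℕ, δ * J ≤ (j : ℝ) →
        (({k : Fin d → ℤ | dyadicCube d j k ⊆ dyadicCube d J K ∧
            ∃ m : ℕ, J ≤ m ∧ m ≤ γ j ∧ ∃ p ∈ Tset x r m,
              (dyadicCube d j k ∩ closedBall (x p) (r p ^ δ)).Nonempty}).ncard : ℝ)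
          ≤ C * 2 ^ (d * (j - J)) *
            (2 ^ (-((d : ℝ) * j * φ (((2:ℝ) ^ j)⁻¹))) +
              ∑ k ∈ Finset.Icc J (⌊(j : ℝ) / δ⌋₊),
                2 ^ (-((d : ℝ) * k * (δ - 1 - ψ (((2:ℝ) ^ k)⁻¹))))) := by
  refine ⟨2 * 64 ^ d, by positivity, ?_⟩
  intro x r N φ ψ γ hx hr hranti hrtend hWR hφ hψdef hγ δ hδ J K hK j hj
  have hδ0 : (0:ℝ) < δ := lt_trans one_pos hδ
  have hJj : J ≤ j := by
    have h1 : (J:ℝ) ≤ δ * J := le_mul_of_one_le_left (Nat.cast_nonneg J) hδ.le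
    exact_mod_cast h1.trans hj
  set b := ⌊(j:ℝ)/δ⌋₊ with hb
  set Tφ : ℝ := 2 ^ (-((d : ℝ) * j * φ (((2:ℝ) ^ j)⁻¹))) with hTφ
  have hTφ0 : 0 < Tφ := Real.rpow_pos_of_pos (by norm_num) _
  set Sψ : ℝ := ∑ k ∈ Finset.Icc J b,
      (2:ℝ) ^ (-((d : ℝ) * k * (δ - 1 - ψ (((2:ℝ) ^ k)⁻¹)))) with hSψ
  have hSψ0 : 0 ≤ Sψ := Finset.sum_nonneg fun k _ => (Real.rpow_pos_of_pos (by norm_num) _).le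
  set Sm : ℕ → Set ℕ := fun m =>
    {p | p ∈ Tset x r m ∧ (closedBall (x p) (r p) ∩ dyadicCube d J K).Nonempty} with hSm
  have hSfin : ∀ m, (Sm m).Finite := fun m => (Scount x r N hr hWR.2.2.2 J K m).1
  set Bm : ℕ → ℝ := fun m => (2 * (2:ℝ) ^ (-((m:ℝ) * δ)) * 2 ^ j + 2) ^ d with hBm
  have hBm0 : ∀ m, 0 ≤ Bm m := fun m => by
    simp only [hBm]; positivity
  set M := {k : Fin d → ℤ | dyadicCube d j k ⊆ dyadicCube d J K ∧
      ∃ m : ℕ, J ≤ m ∧ m ≤ γ j ∧ ∃ p ∈ Tset x r m,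
        (dyadicCube d j k ∩ closedBall (x p) (r p ^ δ)).Nonempty} with hM
  set big : Finset (Fin d → ℤ) := (Finset.Icc J (γ j)).biUnion
      (fun m => ((hSfin m).toFinset).biUnion
        (fun p => meetFinset d j (x p) (r p ^ δ))) with hbig
  -- Step 1 : M is contained in big
  have hMsub : M ⊆ ↑big := by
    rintro k ⟨hsub, m, hJm, hmγ, p, hpT, hne⟩
    rw [Finset.coe_biUnion]
    refine Set.mem_biUnion (Finset.mem_coe.mpr (Finset.mem_Icc.mpr ⟨hJm, hmγ⟩)) ?_
    rw [Finset.coe_biUnion]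
    refine Set.mem_biUnion ?_ (mem_meetFinset hne)
    rw [Finset.mem_coe, Set.Finite.mem_toFinset]
    refine ⟨hpT, ?_⟩
    obtain ⟨y, hy1, hy2⟩ := hne
    refine ⟨y, ?_, hsub hy1⟩
    rw [mem_closedBall] at hy2 ⊢
    refine hy2.trans ?_
    have hr1 : r p ≤ 1 := by
      have h2m : (1:ℝ) ≤ (2:ℝ) ^ m := one_le_pow₀ one_le_two
      exact hpT.2.2.trans (inv_le_one_of_one_le₀ h2m)
    calc r p ^ δ ≤ r p ^ (1:ℝ) :=
          Real.rpow_le_rpow_of_exponent_ge (hr p) hr1 hδ.le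
      _ = r p := Real.rpow_one _
  -- Step 2 : cardinal bound through the double union
  have step2 : (M.ncard : ℝ) ≤ ∑ m ∈ Finset.Icc J (γ j),
      ((N m : ℝ) * (14 * 2 ^ (m - J) : ℝ) ^ d) * Bm m := by
    have h1 : (M.ncard : ℝ) ≤ (big.card : ℝ) := by
      have h := Set.ncard_le_ncard hMsub big.finite_toSet
      rw [Set.ncard_coe_finset] at h
      exact_mod_cast h
    refine h1.trans ?_
    have hcard1 : big.card ≤ ∑ m ∈ Finset.Icc J (γ j),
        ∑ p ∈ (hSfin m).toFinset, (meetFinset d j (x p) (r p ^ δ)).card :=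
      (Finset.card_biUnion_le).trans (Finset.sum_le_sum fun m _ => Finset.card_biUnion_le)
    have hcard1' : (big.card : ℝ) ≤ ∑ m ∈ Finset.Icc J (γ j),
        ∑ p ∈ (hSfin m).toFinset, ((meetFinset d j (x p) (r p ^ δ)).card : ℝ) := by
      exact_mod_cast hcard1
    refine hcard1'.trans (Finset.sum_le_sum fun m hm => ?_)
    have hJm : J ≤ m := (Finset.mem_Icc.mp hm).1
    have hinner : ∀ p ∈ (hSfin m).toFinset,
        ((meetFinset d j (x p) (r p ^ δ)).card : ℝ) ≤ Bm m := by
      intro p hp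
      have hp' : p ∈ Sm m := (Set.Finite.mem_toFinset _).mp hp
      have hρ0 : 0 ≤ r p ^ δ := (Real.rpow_pos_of_pos (hr p) δ).le
      refine (card_meetFinset_le (x p) hρ0).trans ?_
      apply pow_le_pow_left₀ (by positivity)
      have h1' : r p ≤ ((2:ℝ) ^ m)⁻¹ := hp'.1.2.2
      have h2 : r p ^ δ ≤ (2:ℝ) ^ (-((m:ℝ) * δ)) := by
        have h3 : (((2:ℝ) ^ m)⁻¹ : ℝ) ^ δ = (2:ℝ) ^ (-((m:ℝ) * δ)) := by
          rw [← Real.rpow_natCast 2 m, ← Real.rpow_neg (by norm_num),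
            ← Real.rpow_mul (by norm_num), neg_mul]
        calc r p ^ δ ≤ (((2:ℝ) ^ m)⁻¹ : ℝ) ^ δ :=
              Real.rpow_le_rpow (hr p).le h1' hδ0.le
          _ = _ := h3
      have hpj : (0:ℝ) < 2 ^ j := by positivity
      nlinarith
    calc ∑ p ∈ (hSfin m).toFinset, ((meetFinset d j (x p) (r p ^ δ)).card : ℝ)
        ≤ ∑ _p ∈ (hSfin m).toFinset, Bm m := Finset.sum_le_sum hinner
      _ = ((hSfin m).toFinset.card : ℝ) * Bm m := by
          rw [Finset.sum_const, nsmul_eq_mul]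
      _ = ((Sm m).ncard : ℝ) * Bm m := by
          rw [← Set.ncard_coe_finset ((hSfin m).toFinset), Set.Finite.coe_toFinset]
      _ ≤ ((N m : ℝ) * (14 * 2 ^ (m - J) : ℝ) ^ d) * Bm m := by
          exact mul_le_mul_of_nonneg_right
            ((Scount x r N hr hWR.2.2.2 J K m).2 hJm) (hBm0 m)
  refine step2.trans ?_
  -- Step 3 : split the sum at b
  have two_pow_nat : ∀ n : ℕ, ((2:ℝ) ^ n) = (2:ℝ) ^ (n:ℝ) := fun n =>
    (Real.rpow_natCast 2 n).symm
  have pow_nat_rpow : ∀ (y : ℝ) (n : ℕ), ((2:ℝ) ^ y) ^ n = (2:ℝ) ^ (y * n) := fun y n => by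
    rw [← Real.rpow_natCast ((2:ℝ) ^ y) n, ← Real.rpow_mul (by norm_num)]
  have hprod : ∀ a c e : ℝ, (2:ℝ) ^ a * (2:ℝ) ^ c * (2:ℝ) ^ e = (2:ℝ) ^ (a + c + e) :=
    fun a c e => by
      rw [← Real.rpow_add (by norm_num), ← Real.rpow_add (by norm_num)]
  have h56 : (56:ℝ) ^ d = 14 ^ d * 4 ^ d := by rw [← mul_pow]; norm_num
  have h5664 : (56:ℝ) ^ d ≤ 64 ^ d := pow_le_pow_left₀ (by norm_num) (by norm_num) d
  set G : ℕ → ℝ := fun m => ((N m : ℝ) * (14 * 2 ^ (m - J) : ℝ) ^ d) * Bm m with hG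
  rw [← Finset.sum_filter_add_sum_filter_not (Finset.Icc J (γ j)) (fun m => m ≤ b) G]
  have hP : (0:ℝ) < 2 ^ (d * (j - J)) := by positivity
  have part1 : ∑ m ∈ (Finset.Icc J (γ j)).filter (fun m => m ≤ b), G m
      ≤ 64 ^ d * 2 ^ (d * (j - J)) * Sψ := by
    have hterm : ∀ m ∈ (Finset.Icc J (γ j)).filter (fun m => m ≤ b), G m
        ≤ 64 ^ d * 2 ^ (d * (j - J)) *
          (2:ℝ) ^ (-((d:ℝ) * m * (δ - 1 - ψ (((2:ℝ) ^ m)⁻¹)))) := by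
      intro m hm
      rw [Finset.mem_filter, Finset.mem_Icc] at hm
      obtain ⟨⟨hmJ, _⟩, hmb⟩ := hm
      have hmδ : (m:ℝ) * δ ≤ j := by
        have h1 : (m:ℝ) ≤ (j:ℝ)/δ :=
          le_trans (Nat.cast_le.mpr hmb) (Nat.floor_le (by positivity))
        exact (le_div_iff₀ hδ0).mp h1
      set X : ℝ := (2:ℝ) ^ ((j:ℝ) - (m:ℝ) * δ) with hX
      have eX : (2:ℝ) ^ (-((m:ℝ) * δ)) * 2 ^ j = X := by
        rw [two_pow_nat j, ← Real.rpow_add (by norm_num), hX]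
        congr 1; ring
      have hX1 : (1:ℝ) ≤ X := by
        have h := Real.rpow_le_rpow_of_exponent_le one_le_two
          (show (0:ℝ) ≤ (j:ℝ) - (m:ℝ) * δ by linarith)
        rwa [Real.rpow_zero] at h
      have hBmle : Bm m ≤ (4 * X) ^ d := by
        apply pow_le_pow_left₀ (by positivity)
        have e2 : 2 * (2:ℝ) ^ (-((m:ℝ) * δ)) * 2 ^ j = 2 * X := by
          rw [mul_assoc, eX]
        linarith
      calc G m ≤ ((N m : ℝ) * (14 * 2 ^ (m - J) : ℝ) ^ d) * (4 * X) ^ d :=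
            mul_le_mul_of_nonneg_left hBmle (by positivity)
        _ = 56 ^ d * (2:ℝ) ^ ((d:ℝ) * m * ψ (((2:ℝ) ^ m)⁻¹) + ((m - J : ℕ) : ℝ) * d
              + ((j:ℝ) - (m:ℝ) * δ) * d) := by
            rw [hψdef m, mul_pow, mul_pow, two_pow_nat (m - J), pow_nat_rpow, pow_nat_rpow,
              ← hprod, h56]
            ring
        _ = 56 ^ d * ((2:ℝ) ^ ((d:ℝ) * ((j:ℝ) - (J:ℝ))) *
              (2:ℝ) ^ (-((d:ℝ) * m * (δ - 1 - ψ (((2:ℝ) ^ m)⁻¹))))) := by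
            rw [← Real.rpow_add (by norm_num)]
            congr 1
            push_cast [Nat.cast_sub hmJ]
            ring
        _ = 56 ^ d * 2 ^ (d * (j - J)) *
              (2:ℝ) ^ (-((d:ℝ) * m * (δ - 1 - ψ (((2:ℝ) ^ m)⁻¹)))) := by
            rw [two_pow_nat (d * (j - J))]
            push_cast [Nat.cast_sub hJj]
            ring
        _ ≤ 64 ^ d * 2 ^ (d * (j - J)) *
              (2:ℝ) ^ (-((d:ℝ) * m * (δ - 1 - ψ (((2:ℝ) ^ m)⁻¹)))) := by
            have hnn : (0:ℝ) ≤ 2 ^ (d * (j - J)) *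
                (2:ℝ) ^ (-((d:ℝ) * m * (δ - 1 - ψ (((2:ℝ) ^ m)⁻¹)))) := by positivity
            calc 56 ^ d * 2 ^ (d * (j - J)) * (2:ℝ) ^ (-((d:ℝ) * m * (δ - 1 - ψ (((2:ℝ) ^ m)⁻¹))))
                = 56 ^ d * (2 ^ (d * (j - J)) * (2:ℝ) ^ (-((d:ℝ) * m * (δ - 1 - ψ (((2:ℝ) ^ m)⁻¹))))) := by ring
              _ ≤ 64 ^ d * (2 ^ (d * (j - J)) * (2:ℝ) ^ (-((d:ℝ) * m * (δ - 1 - ψ (((2:ℝ) ^ m)⁻¹))))) :=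
                  mul_le_mul_of_nonneg_right h5664 hnn
              _ = _ := by ring
    calc ∑ m ∈ (Finset.Icc J (γ j)).filter (fun m => m ≤ b), G m
        ≤ ∑ m ∈ (Finset.Icc J (γ j)).filter (fun m => m ≤ b),
            64 ^ d * 2 ^ (d * (j - J)) *
              (2:ℝ) ^ (-((d:ℝ) * m * (δ - 1 - ψ (((2:ℝ) ^ m)⁻¹)))) :=
          Finset.sum_le_sum hterm
      _ ≤ ∑ m ∈ Finset.Icc J b, 64 ^ d * 2 ^ (d * (j - J)) *
              (2:ℝ) ^ (-((d:ℝ) * m * (δ - 1 - ψ (((2:ℝ) ^ m)⁻¹)))) := by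
          apply Finset.sum_le_sum_of_subset_of_nonneg
          · intro m hm
            rw [Finset.mem_filter, Finset.mem_Icc] at hm
            rw [Finset.mem_Icc]
            exact ⟨hm.1.1, hm.2⟩
          · intros; positivity
      _ = 64 ^ d * 2 ^ (d * (j - J)) * Sψ := by
          rw [hSψ, Finset.mul_sum]
  have part2 : ∑ m ∈ (Finset.Icc J (γ j)).filter (fun m => ¬ m ≤ b), G m
      ≤ 2 * 56 ^ d * 2 ^ (d * (j - J)) * Tφ := by
    set c0 : ℝ := 56 ^ d * ((2:ℝ) ^ (d * J))⁻¹ with hc0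
    have hc00 : 0 ≤ c0 := by positivity
    have hterm2 : ∀ m ∈ (Finset.Icc J (γ j)).filter (fun m => ¬ m ≤ b), G m
        ≤ c0 * ((N m : ℝ) * 2 ^ (d * m)) := by
      intro m hm
      rw [Finset.mem_filter, Finset.mem_Icc] at hm
      obtain ⟨⟨hmJ, _⟩, hmb⟩ := hm
      have hjm : (j:ℝ) ≤ (m:ℝ) * δ := by
        have h1 : (j:ℝ)/δ < m := by
          by_contra h
          push_neg at h
          exact hmb (Nat.le_floor h)
        exact ((div_lt_iff₀ hδ0).mp h1).le
      have hBm4 : Bm m ≤ 4 ^ d := by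
        apply pow_le_pow_left₀ (by positivity)
        have e1 : (2:ℝ) ^ (-((m:ℝ) * δ)) * 2 ^ j = (2:ℝ) ^ ((j:ℝ) - (m:ℝ) * δ) := by
          rw [two_pow_nat j, ← Real.rpow_add (by norm_num)]
          congr 1; ring
        have e2 : (2:ℝ) ^ ((j:ℝ) - (m:ℝ) * δ) ≤ 1 := by
          have h := Real.rpow_le_rpow_of_exponent_le one_le_two
            (show (j:ℝ) - (m:ℝ) * δ ≤ 0 by linarith)
          rwa [Real.rpow_zero] at h
        have e3 : 2 * (2:ℝ) ^ (-((m:ℝ) * δ)) * 2 ^ j = 2 * (2:ℝ) ^ ((j:ℝ) - (m:ℝ) * δ) := by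
          rw [mul_assoc, e1]
        linarith
      have e6 : ((2:ℝ) ^ (m - J)) ^ d * 2 ^ (d * J) = 2 ^ (d * m) := by
        rw [← pow_mul, ← pow_add]
        congr 1
        rw [mul_comm d J, mul_comm d m, ← Nat.add_mul, Nat.sub_add_cancel hmJ]
      have e7 : ((2:ℝ) ^ (m - J)) ^ d = 2 ^ (d * m) * ((2:ℝ) ^ (d * J))⁻¹ := by
        rw [← e6]; field_simp
      calc G m ≤ ((N m : ℝ) * (14 * 2 ^ (m - J) : ℝ) ^ d) * 4 ^ d :=
            mul_le_mul_of_nonneg_left hBm4 (by positivity)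
        _ = c0 * ((N m : ℝ) * 2 ^ (d * m)) := by
            rw [mul_pow, e7, hc0, h56]
            ring
    calc ∑ m ∈ (Finset.Icc J (γ j)).filter (fun m => ¬ m ≤ b), G m
        ≤ ∑ m ∈ (Finset.Icc J (γ j)).filter (fun m => ¬ m ≤ b),
            c0 * ((N m : ℝ) * 2 ^ (d * m)) := Finset.sum_le_sum hterm2
      _ = c0 * ∑ m ∈ (Finset.Icc J (γ j)).filter (fun m => ¬ m ≤ b),
            ((N m : ℝ) * 2 ^ (d * m)) := by rw [Finset.mul_sum]
      _ ≤ c0 * ∑ m ∈ Finset.Icc J (γ j), ((N m : ℝ) * 2 ^ (d * m)) := by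
          apply mul_le_mul_of_nonneg_left _ hc00
          apply Finset.sum_le_sum_of_subset_of_nonneg (Finset.filter_subset _ _)
          intros; positivity
      _ ≤ c0 * (2 * ((N (γ j) : ℝ) * 2 ^ (d * (γ j)))) :=
          mul_le_mul_of_nonneg_left (sum_NtwoPow_le hWR.1 hd J (γ j)) hc00
      _ ≤ c0 * (2 * (Tφ * 2 ^ (d * j))) := by
          apply mul_le_mul_of_nonneg_left _ hc00
          apply mul_le_mul_of_nonneg_left _ (by norm_num)
          have hγ1 := (hγ j).1
          rw [Set.mem_setOf_eq] at hγ1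
          have ecast1 : (2:ℝ) ^ ((d:ℝ) * (γ j)) = 2 ^ (d * (γ j)) := by
            rw [two_pow_nat (d * (γ j))]; push_cast; ring_nf
          have ecast2 : (2:ℝ) ^ ((d:ℝ) * (j:ℝ)) = 2 ^ (d * j) := by
            rw [two_pow_nat (d * j)]; push_cast; ring_nf
          rw [ecast1, ecast2] at hγ1
          exact hγ1
      _ = 2 * 56 ^ d * ((2:ℝ) ^ (d * j) * ((2:ℝ) ^ (d * J))⁻¹) * Tφ := by
          rw [hc0]; ring
      _ = 2 * 56 ^ d * 2 ^ (d * (j - J)) * Tφ := by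
          have e4 : (2:ℝ) ^ (d * (j - J)) * 2 ^ (d * J) = 2 ^ (d * j) := by
            rw [← pow_add, ← Nat.mul_add, Nat.sub_add_cancel hJj]
          have e5 : (2:ℝ) ^ (d * j) * ((2:ℝ) ^ (d * J))⁻¹ = 2 ^ (d * (j - J)) := by
            rw [← e4]; field_simp
          rw [e5]
  have hfinal : 64 ^ d * 2 ^ (d * (j - J)) * Sψ + 2 * 56 ^ d * 2 ^ (d * (j - J)) * Tφ
      ≤ 2 * 64 ^ d * 2 ^ (d * (j - J)) * (Tφ + Sψ) := by
    have h1 : (0:ℝ) ≤ 64 ^ d * 2 ^ (d * (j - J)) * Sψ := by positivity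
    nlinarith [mul_le_mul_of_nonneg_right h5664 (mul_nonneg hP.le hTφ0.le),
      mul_nonneg (mul_nonneg (show (0:ℝ) ≤ 64 ^ d by positivity) hP.le) hSψ0]
  linarith [part1, part2]
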